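/- Let b and s be integers with 2 ≤ b < s, let r > 0 and N ∈ ℕ, and let (ω_a)_{a∈E_N} be i.i.d. standard Gaussian random variables. Set X_a := exp(√r·(b/s)^{N/2}·ω_a − (r/2)·(b/s)^N) for each a ∈ E_N, and let W := 𝐖_N((X_a)_{a∈E_N}). Then the fractional moment satisfies E[W^{1/2}] ≤ exp((1 − √r)/2). -/

import Mathlib

open Filter MeasureTheory ProbabilityTheory

/-- The edge set of the `n`-th diamond graph with branching number `b` and
segment number `s`: `E_n = ({1,…,b}×{1,…,s})^n`. -/
abbrev DiamondEdge (b s n : ℕ) := Fin n → Fin b × Fin s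

/-- The recursively defined path average `𝐖_n` of edge weights on the diamond graph:
`𝐖_0(X) = X` and
`𝐖_n((X_a)) = (1/b)·Σ_{i=1}^b ∏_{j=1}^s 𝐖_{n−1}((X_{((i,j),a')})_{a'})`. -/
noncomputable def polyW (b s : ℕ) : (n : ℕ) → (DiamondEdge b s n → ℝ) → ℝ
  | 0, X => X finZeroElim
  | n + 1, X =>
      (1 / (b : ℝ)) * ∑ i : Fin b, ∏ j : Fin s,
        polyW b s n (fun a => X (Fin.cons (i, j) a))

lemma pdf_identity (t k x : ℝ) :
    gaussianPDFReal 0 1 x * Real.exp (t * x + k)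
      = Real.exp (t ^ 2 / 2 + k) * gaussianPDFReal t 1 x := by
  simp only [gaussianPDFReal, NNReal.coe_one, mul_one, sub_zero]
  rw [mul_assoc, ← Real.exp_add, mul_comm (Real.exp _), mul_assoc, ← Real.exp_add]
  congr 1
  ring_nf

lemma gauss_eq : gaussianReal 0 1
    = MeasureTheory.volume.withDensity (fun x => ((gaussianPDFReal 0 1 x).toNNReal : ENNReal)) :=
  gaussianReal_of_var_ne_zero 0 one_ne_zero

lemma integrable_exp_affine_gaussian (t k : ℝ) :
    Integrable (fun x => Real.exp (t * x + k)) (gaussianReal 0 1) := by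
  rw [gauss_eq, integrable_withDensity_iff_integrable_smul
    (measurable_gaussianPDFReal 0 1).real_toNNReal]
  have : (fun x => (gaussianPDFReal 0 1 x).toNNReal • Real.exp (t * x + k))
      = fun x => Real.exp (t ^ 2 / 2 + k) * gaussianPDFReal t 1 x := by
    funext x
    rw [NNReal.smul_def, Real.coe_toNNReal _ (gaussianPDFReal_nonneg _ _ _), smul_eq_mul, pdf_identity]
  rw [this]
  exact (integrable_gaussianPDFReal t 1).const_mul _

lemma integral_exp_affine_gaussian (t k : ℝ) :
    ∫ x, Real.exp (t * x + k) ∂(gaussianReal 0 1) = Real.exp (t ^ 2 / 2 + k) := by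
  rw [gauss_eq, integral_withDensity_eq_integral_smul
    (measurable_gaussianPDFReal 0 1).real_toNNReal]
  have : (fun x => (gaussianPDFReal 0 1 x).toNNReal • Real.exp (t * x + k))
      = fun x => Real.exp (t ^ 2 / 2 + k) * gaussianPDFReal t 1 x := by
    funext x
    rw [NNReal.smul_def, Real.coe_toNNReal _ (gaussianPDFReal_nonneg _ _ _), smul_eq_mul, pdf_identity]
  rw [this, integral_const_mul, integral_gaussianPDFReal_eq_one t one_ne_zero, mul_one]


lemma indep_prod_integral {ι : Type*} {Ω : Type*} [MeasurableSpace Ω] {μ : Measure Ω}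
    [IsProbabilityMeasure μ] (f : ι → Ω → ℝ)
    (hindep : iIndepFun f μ)
    (hm : ∀ i, Measurable (f i)) (hint : ∀ i, Integrable (f i) μ) (t : Finset ι) :
    Integrable (fun ω => ∏ i ∈ t, f i ω) μ ∧
      ∫ ω, ∏ i ∈ t, f i ω ∂μ = ∏ i ∈ t, ∫ ω, f i ω ∂μ := by
  classical
  induction t using Finset.induction_on with
  | empty => simp
  | @insert a t ha ih =>
    have hiF : IndepFun (f a) (fun ω => ∏ i ∈ t, f i ω) μ := by
      have := hindep.indepFun_finsetProd_of_notMem hm ha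
      have he : (∏ j ∈ t, f j) = fun ω => ∏ i ∈ t, f i ω := by
        funext ω; simp
      rw [he] at this
      exact this.symm
    have hInt : Integrable (fun ω => f a ω * ∏ i ∈ t, f i ω) μ := by
      have := hiF.integrable_mul (hint a) ih.1
      simpa [Pi.mul_def] using this
    constructor
    · simpa [Finset.prod_insert ha] using hInt
    · rw [show (∫ ω, ∏ i ∈ insert a t, f i ω ∂μ)
          = ∫ ω, f a ω * ∏ i ∈ t, f i ω ∂μ by simp [Finset.prod_insert ha]]
      have := hiF.integral_mul_eq_mul_integral (hint a).1 ih.1.1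
      simp only [Pi.mul_def] at this
      rw [this, ih.2, Finset.prod_insert ha]


def DPath (b s : ℕ) : ℕ → Type
  | 0 => PUnit
  | n + 1 => Fin b × (Fin s → DPath b s n)

instance instFintypeDPath (b s : ℕ) : (n : ℕ) → Fintype (DPath b s n)
  | 0 => inferInstanceAs (Fintype PUnit)
  | n + 1 => letI := instFintypeDPath b s n
             inferInstanceAs (Fintype (Fin b × (Fin s → DPath b s n)))

def onPath (b s : ℕ) : (n : ℕ) → DPath b s n → DiamondEdge b s n → Bool
  | 0, _, _ => true
  | n + 1, p, a => (a 0).1 == p.1 && onPath b s n (p.2 (a 0).2) (fun k => a k.succ)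

def pgam (s : ℕ) : ℕ → ℕ
  | 0 => 0
  | n + 1 => 1 + s * pgam s n

lemma card_edge (b s n : ℕ) : Fintype.card (DiamondEdge b s n) = (b * s) ^ n := by
  simp [DiamondEdge]

lemma card_DPath (b s : ℕ) : ∀ n, Fintype.card (DPath b s n) = b ^ pgam s n
  | 0 => rfl
  | n + 1 => by
    show Fintype.card (Fin b × (Fin s → DPath b s n)) = _
    rw [Fintype.card_prod, Fintype.card_fun, Fintype.card_fin, Fintype.card_fin,
      card_DPath b s n, pgam, ← pow_mul, pow_add, pow_one, mul_comm (pgam s n) s]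

lemma prod_edge_succ {M : Type*} [CommMonoid M] {b s n : ℕ} (F : DiamondEdge b s (n + 1) → M) :
    ∏ a : DiamondEdge b s (n + 1), F a
      = ∏ x : Fin b × Fin s, ∏ a' : DiamondEdge b s n, F (Fin.cons x a') := by
  rw [← Equiv.prod_comp (Fin.consEquiv (fun _ => Fin b × Fin s)) F, Fintype.prod_prod_type]
  rfl

lemma polyW_expand (b s : ℕ) (hb : (b : ℝ) ≠ 0) :
    ∀ (n : ℕ) (X : DiamondEdge b s n → ℝ),
    (b : ℝ) ^ pgam s n * polyW b s n X
      = ∑ p : DPath b s n, ∏ a : DiamondEdge b s n,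
          (if onPath b s n p a then X a else 1) := by
  intro n
  induction n with
  | zero =>
    intro X
    rw [pgam, pow_zero, one_mul]
    haveI : Unique (DPath b s 0) := inferInstanceAs (Unique PUnit)
    rw [Fintype.sum_unique, Fintype.prod_unique]
    show X finZeroElim = if onPath b s 0 default default then X default else 1
    rw [Subsingleton.elim (finZeroElim : DiamondEdge b s 0) default]
    simp [onPath]
  | succ n ih =>
    intro X
    have lhs : (b : ℝ) ^ pgam s (n + 1) * polyW b s (n + 1) X
        = ∑ i : Fin b, ∑ f ∈ Fintype.piFinset (fun _ : Fin s => (Finset.univ : Finset (DPath b s n))),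
            ∏ j : Fin s, ∏ a' : DiamondEdge b s n,
              (if onPath b s n (f j) a' then X (Fin.cons (i, j) a') else 1) := by
      rw [pgam, polyW]
      have hgen : ∀ T : ℝ, (b : ℝ) ^ (1 + s * pgam s n) * ((1 / b) * T)
          = ((b : ℝ) ^ pgam s n) ^ s * T := by
        intro T
        rw [pow_add, pow_one, pow_mul]
        field_simp
        ring
      rw [hgen, Finset.mul_sum]
      refine Finset.sum_congr rfl fun i _ => ?_
      rw [show (((b : ℝ) ^ pgam s n) ^ s) = ∏ _j : Fin s, (b : ℝ) ^ pgam s n by simp,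
        ← Finset.prod_mul_distrib]
      rw [show (∏ j : Fin s, (b:ℝ) ^ pgam s n * polyW b s n (fun a => X (Fin.cons (i, j) a)))
          = ∏ j : Fin s, ∑ p : DPath b s n, ∏ a' : DiamondEdge b s n,
              (if onPath b s n p a' then X (Fin.cons (i, j) a') else 1) from
        Finset.prod_congr rfl fun j _ => ih _]
      rw [Finset.prod_univ_sum]
    rw [lhs]
    rw [show (∑ p : DPath b s (n+1), ∏ a : DiamondEdge b s (n+1),
          (if onPath b s (n+1) p a then X a else 1))
        = ∑ q : Fin b × (Fin s → DPath b s n), ∏ a : DiamondEdge b s (n+1),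
          (if onPath b s (n+1) q a then X a else 1) from rfl]
    rw [Fintype.sum_prod_type]
    refine Finset.sum_congr rfl fun i _ => ?_
    rw [show (Fintype.piFinset fun _ : Fin s => (Finset.univ : Finset (DPath b s n)))
        = Finset.univ from Fintype.piFinset_univ]
    refine Finset.sum_congr rfl fun f _ => ?_
    rw [prod_edge_succ, Fintype.prod_prod_type]
    rw [Finset.prod_eq_single_of_mem i (Finset.mem_univ i) ?side]
    case side =>
      intro i' _ hne
      refine Finset.prod_eq_one fun j _ => Finset.prod_eq_one fun a' _ => ?_
      rw [if_neg]
      simp [onPath, Fin.cons_zero, Fin.cons_succ, hne]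
    refine Finset.prod_congr rfl fun j _ => Finset.prod_congr rfl fun a' _ => ?_
    congr 1
    simp [onPath, Fin.cons_zero, Fin.cons_succ]

set_option maxRecDepth 8000 in
lemma prod_onPath (b s : ℕ) (hb : 0 < b) :
    ∀ (n : ℕ) (p : DPath b s n) (u v : ℝ),
    (∏ a : DiamondEdge b s n, (if onPath b s n p a then u else v)) * v ^ (s ^ n)
      = u ^ (s ^ n) * v ^ ((b * s) ^ n) := by
  intro n
  induction n with
  | zero =>
    intro p u v
    haveI : Unique (DiamondEdge b s 0) := inferInstance
    rw [Fintype.prod_unique]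
    simp [onPath]
  | succ n ih =>
    intro p u v
    obtain ⟨b', rfl⟩ : ∃ b', b = b' + 1 := ⟨b - 1, (Nat.succ_pred_eq_of_pos hb).symm⟩
    rw [show (∏ a : DiamondEdge (b'+1) s (n+1), (if onPath (b'+1) s (n+1) p a then u else v))
        = ∏ i' : Fin (b'+1), ∏ j : Fin s, ∏ a' : DiamondEdge (b'+1) s n,
            (if i' = p.1 ∧ onPath (b'+1) s n (p.2 j) a' then u else v) from ?_]
    · rw [← Finset.mul_prod_erase Finset.univ _ (Finset.mem_univ p.1)]
      have hmain : (∏ j : Fin s, ∏ a' : DiamondEdge (b'+1) s n,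
            (if p.1 = p.1 ∧ onPath (b'+1) s n (p.2 j) a' then u else v)) * v ^ (s ^ (n+1))
          = (u ^ (s ^ n) * v ^ (((b'+1) * s) ^ n)) ^ s := by
        have hv : v ^ (s ^ (n+1)) = ∏ _j : Fin s, v ^ (s ^ n) := by
          rw [Finset.prod_const, Finset.card_univ, Fintype.card_fin, ← pow_mul, pow_succ]
        have hr : (u ^ (s ^ n) * v ^ (((b'+1) * s) ^ n)) ^ s
            = ∏ _j : Fin s, (u ^ (s ^ n) * v ^ (((b'+1) * s) ^ n)) := by
          rw [Finset.prod_const, Finset.card_univ, Fintype.card_fin]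
        rw [hv, hr, ← Finset.prod_mul_distrib]
        refine Finset.prod_congr rfl fun j _ => ?_
        rw [← ih (p.2 j) u v]
        congr 1
        refine Finset.prod_congr rfl fun a' _ => ?_
        simp
      have hrest : (∏ i' ∈ Finset.univ.erase p.1, ∏ j : Fin s, ∏ a' : DiamondEdge (b'+1) s n,
            (if i' = p.1 ∧ onPath (b'+1) s n (p.2 j) a' then u else v))
          = (v ^ (((b'+1) * s) ^ n * s)) ^ b' := by
        rw [show ((v ^ (((b'+1) * s) ^ n * s)) ^ b')
            = ∏ _i' ∈ Finset.univ.erase p.1, v ^ (((b'+1) * s) ^ n * s) from by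
          rw [Finset.prod_const, Finset.card_erase_of_mem (Finset.mem_univ _),
            Finset.card_univ, Fintype.card_fin, Nat.add_sub_cancel]]
        refine Finset.prod_congr rfl fun i' hi' => ?_
        have hne : i' ≠ p.1 := (Finset.mem_erase.mp hi').1
        rw [show (∏ j : Fin s, ∏ a' : DiamondEdge (b'+1) s n,
            (if i' = p.1 ∧ onPath (b'+1) s n (p.2 j) a' then u else v))
          = ∏ _j : Fin s, ∏ _a' : DiamondEdge (b'+1) s n, v from
          Finset.prod_congr rfl fun j _ => Finset.prod_congr rfl fun a' _ => if_neg
            (by simp [hne])]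
        rw [Finset.prod_const, Finset.prod_const, Finset.card_univ, Finset.card_univ,
          Fintype.card_fin, card_edge, ← pow_mul]
      calc (∏ j : Fin s, ∏ a' : DiamondEdge (b'+1) s n,
            (if p.1 = p.1 ∧ onPath (b'+1) s n (p.2 j) a' then u else v))
            * (∏ i' ∈ Finset.univ.erase p.1, ∏ j : Fin s, ∏ a' : DiamondEdge (b'+1) s n,
              (if i' = p.1 ∧ onPath (b'+1) s n (p.2 j) a' then u else v)) * v ^ (s ^ (n+1))
          = ((∏ j : Fin s, ∏ a' : DiamondEdge (b'+1) s n,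
              (if p.1 = p.1 ∧ onPath (b'+1) s n (p.2 j) a' then u else v)) * v ^ (s ^ (n+1)))
            * (v ^ (((b'+1) * s) ^ n * s)) ^ b' := by rw [← hrest]; ring
        _ = (u ^ (s ^ n) * v ^ (((b'+1) * s) ^ n)) ^ s * (v ^ (((b'+1) * s) ^ n * s)) ^ b' := by
              rw [hmain]
        _ = u ^ (s ^ (n+1)) * v ^ (((b'+1) * s) ^ (n+1)) := by
              have he : ((b'+1) * s) ^ n * s + ((b'+1) * s) ^ n * s * b'
                  = ((b'+1) * s) ^ n * ((b'+1) * s) := by ring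
              rw [mul_pow, ← pow_mul, ← pow_mul, ← pow_mul, mul_assoc, ← pow_add, he,
                pow_succ, pow_succ]
    · rw [prod_edge_succ, Fintype.prod_prod_type]
      refine Finset.prod_congr rfl fun i' _ => Finset.prod_congr rfl fun j _ =>
        Finset.prod_congr rfl fun a' _ => ?_
      congr 1
      simp [onPath, Fin.cons_zero, Fin.cons_succ]

lemma polyW_nonneg (b s : ℕ) : ∀ (n : ℕ) (X : DiamondEdge b s n → ℝ),
    (∀ a, 0 ≤ X a) → 0 ≤ polyW b s n X
  | 0, X, h => h _
  | n + 1, X, h => by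
    rw [polyW]
    refine mul_nonneg (by positivity) (Finset.sum_nonneg fun i _ =>
      Finset.prod_nonneg fun j _ => polyW_nonneg b s n _ (fun a => h _))

lemma sqrt_mul_le_amgm (x y t : ℝ) (hx : 0 ≤ x) (hy : 0 ≤ y) (ht : 0 < t) :
    Real.sqrt (x * y) ≤ (t * x + t⁻¹ * y) / 2 := by
  have hxy : x * y = (t * x) * (t⁻¹ * y) := by
    field_simp
  rw [hxy]
  calc Real.sqrt ((t * x) * (t⁻¹ * y))
      ≤ Real.sqrt (((t * x + t⁻¹ * y) / 2) ^ 2) := by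
        refine Real.sqrt_le_sqrt ?_
        nlinarith [sq_nonneg (t * x - t⁻¹ * y), mul_nonneg (le_of_lt ht) hx,
          mul_nonneg (le_of_lt (inv_pos.mpr ht)) hy]
    _ = (t * x + t⁻¹ * y) / 2 := Real.sqrt_sq (by positivity)

lemma exp_affine_facts {Ω : Type*} [MeasurableSpace Ω] {μ : Measure Ω}
    (w : Ω → ℝ) (hw : Measurable w) (hlaw : μ.map w = gaussianReal 0 1) (t k : ℝ) :
    Integrable (fun ω' => Real.exp (t * w ω' + k)) μ ∧
    ∫ ω', Real.exp (t * w ω' + k) ∂μ = Real.exp (t ^ 2 / 2 + k) := by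
  have hg : Measurable fun x : ℝ => Real.exp (t * x + k) := by fun_prop
  constructor
  · have h1 : Integrable (fun x => Real.exp (t * x + k)) (μ.map w) := by
      rw [hlaw]
      exact integrable_exp_affine_gaussian t k
    exact (integrable_map_measure hg.aestronglyMeasurable hw.aemeasurable).mp h1
  · rw [← integral_exp_affine_gaussian t k, ← hlaw,
      integral_map hw.aemeasurable hg.aestronglyMeasurable]

lemma edge_prod_facts {ι : Type*} [Fintype ι] {Ω : Type*} [MeasurableSpace Ω]
    {μ : Measure Ω} [IsProbabilityMeasure μ]
    (w : ι → Ω → ℝ) (hw : ∀ a, Measurable (w a))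
    (hindep : iIndepFun w μ)
    (hlaw : ∀ a, μ.map (w a) = gaussianReal 0 1) (t k : ι → ℝ) :
    Integrable (fun ω' => ∏ a, Real.exp (t a * w a ω' + k a)) μ ∧
    ∫ ω', ∏ a, Real.exp (t a * w a ω' + k a) ∂μ
      = ∏ a, Real.exp ((t a) ^ 2 / 2 + k a) := by
  have hg : ∀ a, Measurable fun x : ℝ => Real.exp (t a * x + k a) := fun a => by fun_prop
  have hcomp : iIndepFun
      (fun a ω' => Real.exp (t a * w a ω' + k a)) μ := hindep.comp _ hg
  have hfacts := fun a => exp_affine_facts (w a) (hw a) (hlaw a) (t a) (k a)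
  have hmain := indep_prod_integral (fun a ω' => Real.exp (t a * w a ω' + k a)) hcomp
      (fun a => (hg a).comp (hw a)) (fun a => (hfacts a).1) Finset.univ
  exact ⟨hmain.1, by rw [hmain.2]; exact Finset.prod_congr rfl fun a _ => (hfacts a).2⟩

/-- For `2 ≤ b < s`, `r > 0`, i.i.d. standard Gaussians
`(ω_a)_{a ∈ E_N}`, the weights `X_a = exp(√r (b/s)^{N/2} ω_a − (r/2)(b/s)^N)` and
`W = 𝐖_N((X_a))` satisfy `E[W^{1/2}] ≤ exp((1−√r)/2)`. -/
theorem stmt15 (b s : ℕ) (hb : 2 ≤ b) (hbs : b < s)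
    (r : ℝ) (hr : 0 < r) (N : ℕ)
    {Ω : Type*} [MeasurableSpace Ω] (μ : Measure Ω) [IsProbabilityMeasure μ]
    (omega : DiamondEdge b s N → Ω → ℝ)
    (hmeas : ∀ a, Measurable (omega a))
    (hindep : iIndepFun omega μ)
    (hlaw : ∀ a, μ.map (omega a) = gaussianReal 0 1)
    (X : DiamondEdge b s N → Ω → ℝ)
    (hX : ∀ a ω', X a ω' =
      Real.exp (Real.sqrt r * Real.sqrt (((b : ℝ) / s) ^ N) * omega a ω'
        - (r / 2) * ((b : ℝ) / s) ^ N)) :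
    ∫ ω', Real.sqrt (polyW b s N (fun a => X a ω')) ∂μ
      ≤ Real.exp ((1 - Real.sqrt r) / 2) := by
  classical
  have hb0 : 0 < b := by omega
  have hs0 : 0 < s := by omega
  have hbR : (0:ℝ) < b := by exact_mod_cast hb0
  have hsR : (0:ℝ) < s := by exact_mod_cast hs0
  have hbne : (b:ℝ) ≠ 0 := ne_of_gt hbR
  set σ : ℝ := Real.sqrt r * Real.sqrt (((b : ℝ) / s) ^ N) with hσdef
  set c : ℝ := (Real.sqrt (((b : ℝ) * s) ^ N))⁻¹ with hcdef
  set κ : ℝ := r / 2 * ((b : ℝ) / s) ^ N with hκdef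
  have hbsN : (0:ℝ) < ((b:ℝ) * s) ^ N := by positivity
  have hsN : (0:ℝ) < (s:ℝ) ^ N := by positivity
  -- key scalar identities
  have hc2 : c ^ 2 * ((b:ℝ) * s) ^ N = 1 := by
    rw [hcdef, inv_pow, Real.sq_sqrt hbsN.le]
    exact inv_mul_cancel₀ (ne_of_gt hbsN)
  have hσc : σ * c * (s:ℝ) ^ N = Real.sqrt r := by
    have hinner : Real.sqrt (((b:ℝ)/s) ^ N) * (Real.sqrt (((b:ℝ) * s) ^ N))⁻¹
        = (((s:ℝ) ^ N)⁻¹) := by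
      rw [← Real.sqrt_inv, ← Real.sqrt_mul (by positivity)]
      rw [show ((b:ℝ)/s) ^ N * ((((b:ℝ) * s) ^ N)⁻¹) = (((s:ℝ) ^ N)⁻¹) ^ 2 by
        rw [div_pow, mul_pow]
        field_simp]
      exact Real.sqrt_sq (by positivity)
    have hsc : σ * c = Real.sqrt r * (((s:ℝ) ^ N)⁻¹) := by
      rw [hσdef, hcdef, mul_assoc, hinner]
    rw [hsc, mul_assoc, inv_mul_cancel₀ (ne_of_gt hsN), mul_one]
  have hκσ : κ = σ ^ 2 / 2 := by
    rw [hσdef, hκdef, mul_pow, Real.sq_sqrt hr.le, Real.sq_sqrt (by positivity)]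
    ring
  -- the tilted weights
  set tf : DPath b s N → DiamondEdge b s N → ℝ :=
    fun p a => if onPath b s N p a then σ - c else -c with htf
  set kf : DPath b s N → DiamondEdge b s N → ℝ :=
    fun p a => if onPath b s N p a then -κ else 0 with hkf
  set F : DPath b s N → Ω → ℝ :=
    fun p ω' => ∏ a, Real.exp (tf p a * omega a ω' + kf p a) with hF
  set Q : Ω → ℝ := fun ω' => ∏ a, Real.exp (c * omega a ω' + 0) with hQ
  -- integrability and integrals
  have hQfacts := edge_prod_facts omega hmeas hindep hlaw (fun _ => c) (fun _ => 0)
  have hQval : ∫ ω', Q ω' ∂μ = Real.exp (1/2 : ℝ) := by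
    rw [hQ]
    rw [hQfacts.2, Finset.prod_const, ← Real.exp_nat_mul, Finset.card_univ, card_edge]
    congr 1
    push_cast
    rw [show ((b:ℝ) * s) ^ N * (c ^ 2 / 2 + 0) = c ^ 2 * ((b:ℝ) * s) ^ N / 2 by ring, hc2]
  have hFfacts := fun p => edge_prod_facts omega hmeas hindep hlaw (tf p) (kf p)
  have hFval : ∀ p, ∫ ω', F p ω' ∂μ = Real.exp (1/2 - Real.sqrt r) := by
    intro p
    rw [hF]
    rw [(hFfacts p).2]
    have hsplit : (∏ a, Real.exp ((tf p a) ^ 2 / 2 + kf p a))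
        = ∏ a : DiamondEdge b s N, (if onPath b s N p a
            then Real.exp ((σ - c) ^ 2 / 2 - κ) else Real.exp (c ^ 2 / 2)) := by
      refine Finset.prod_congr rfl fun a _ => ?_
      by_cases h : onPath b s N p a <;> simp [htf, hkf, h, neg_sq, sub_eq_add_neg]
    rw [hsplit]
    have hcount := prod_onPath b s hb0 N p (Real.exp ((σ - c) ^ 2 / 2 - κ)) (Real.exp (c ^ 2 / 2))
    have hne : (Real.exp (c ^ 2 / 2)) ^ (s ^ N) ≠ 0 := by positivity
    have : (∏ a : DiamondEdge b s N, (if onPath b s N p a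
            then Real.exp ((σ - c) ^ 2 / 2 - κ) else Real.exp (c ^ 2 / 2)))
        = Real.exp ((σ - c) ^ 2 / 2 - κ) ^ s ^ N
          * Real.exp (c ^ 2 / 2) ^ (b * s) ^ N / Real.exp (c ^ 2 / 2) ^ s ^ N := by
      rw [eq_div_iff hne]
      exact hcount
    rw [this, ← Real.exp_nat_mul, ← Real.exp_nat_mul, ← Real.exp_nat_mul,
      ← Real.exp_add, ← Real.exp_sub]
    congr 1
    rw [hκσ]
    push_cast
    linear_combination (-(1:ℝ)) * hσc + hc2 / 2
  -- the averaged tilted weight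
  set γ := pgam s N with hγ
  have hbγne : ((b:ℝ) ^ γ) ≠ 0 := by positivity
  set P : Ω → ℝ := fun ω' => ((b:ℝ) ^ γ)⁻¹ * ∑ p : DPath b s N, F p ω' with hP
  have hPval : ∫ ω', P ω' ∂μ = Real.exp (1/2 - Real.sqrt r) := by
    rw [hP]
    rw [MeasureTheory.integral_const_mul,
      integral_finset_sum _ (fun p _ => (hFfacts p).1)]
    rw [Finset.sum_congr rfl (fun p _ => hFval p), Finset.sum_const, Finset.card_univ,
      card_DPath, nsmul_eq_mul]
    push_cast
    rw [← mul_assoc, inv_mul_cancel₀ hbγne, one_mul]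
  have hPint : Integrable P μ := by
    rw [hP]
    exact (integrable_finset_sum _ (fun p _ => (hFfacts p).1)).const_mul _
  have hQint : Integrable Q μ := hQfacts.1
  -- pointwise decomposition  polyW = P * Q
  have hPQ : ∀ ω', polyW b s N (fun a => X a ω') = P ω' * Q ω' := by
    intro ω'
    have hexp := polyW_expand b s hbne N (fun a => X a ω')
    have hW : polyW b s N (fun a => X a ω')
        = ((b:ℝ) ^ γ)⁻¹ * ∑ p : DPath b s N, ∏ a : DiamondEdge b s N,
            (if onPath b s N p a then X a ω' else 1) :=
      (eq_inv_mul_iff_mul_eq₀ hbγne).mpr hexp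
    rw [hW, hP, hQ, mul_assoc, Finset.sum_mul]
    congr 1
    refine Finset.sum_congr rfl fun p _ => ?_
    rw [hF, ← Finset.prod_mul_distrib]
    refine Finset.prod_congr rfl fun a _ => ?_
    by_cases h : onPath b s N p a
    · simp only [htf, hkf, h, if_true, ← Real.exp_add, hX a ω']
      congr 1
      ring
    · simp only [htf, hkf, h, Bool.false_eq_true, if_false, ← Real.exp_add]
      rw [show -c * omega a ω' + 0 + (c * omega a ω' + 0) = 0 by ring, Real.exp_zero]
  -- pointwise AM-GM bound
  set tt : ℝ := Real.exp (Real.sqrt r / 2) with htt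
  have htt0 : 0 < tt := Real.exp_pos _
  have hPnn : ∀ ω', 0 ≤ P ω' := by
    intro ω'
    rw [hP]
    refine mul_nonneg (by positivity) (Finset.sum_nonneg fun p _ => ?_)
    rw [hF]
    exact Finset.prod_nonneg fun a _ => (Real.exp_pos _).le
  have hQnn : ∀ ω', 0 ≤ Q ω' := by
    intro ω'
    rw [hQ]
    exact Finset.prod_nonneg fun a _ => (Real.exp_pos _).le
  have hptwise : ∀ ω', Real.sqrt (polyW b s N (fun a => X a ω'))
      ≤ (tt * P ω' + tt⁻¹ * Q ω') / 2 := by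
    intro ω'
    rw [hPQ ω']
    exact sqrt_mul_le_amgm _ _ _ (hPnn ω') (hQnn ω') htt0
  have hRHSint : Integrable (fun ω' => (tt * P ω' + tt⁻¹ * Q ω') / 2) μ :=
    (((hPint.const_mul tt).add (hQint.const_mul tt⁻¹)).div_const 2)
  calc ∫ ω', Real.sqrt (polyW b s N (fun a => X a ω')) ∂μ
      ≤ ∫ ω', (tt * P ω' + tt⁻¹ * Q ω') / 2 ∂μ := by
        refine integral_mono_of_nonneg (Filter.Eventually.of_forall fun ω' => Real.sqrt_nonneg _)
          hRHSint (Filter.Eventually.of_forall hptwise)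
    _ = (tt * ∫ ω', P ω' ∂μ + tt⁻¹ * ∫ ω', Q ω' ∂μ) / 2 := by
        rw [integral_div, integral_add (hPint.const_mul tt) (hQint.const_mul tt⁻¹),
          MeasureTheory.integral_const_mul, MeasureTheory.integral_const_mul,
          MeasureTheory.integral_const_mul]
    _ = Real.exp ((1 - Real.sqrt r) / 2) := by
        rw [hPval, hQval, htt, ← Real.exp_neg, ← Real.exp_add, ← Real.exp_add]
        rw [show Real.sqrt r / 2 + (1/2 - Real.sqrt r) = (1 - Real.sqrt r)/2 by ring,
          show -(Real.sqrt r / 2) + 1/2 = (1 - Real.sqrt r)/2 by ring]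
        ring
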